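/- Fix τ₁ < τ₂ and R > 0. There exists c_J > 0 such that for all (r, g) ∈ [-R, R]², the Jacobian matrix J of the two-anchor map Γ(r,g) = (Φ((r-τ₁)e^{-g}), Φ((r-τ₂)e^{-g})) satisfies JᵀJ ⪰ c_J·I₂ (i.e., the smallest eigenvalue of JᵀJ is at least c_J). -/

import Mathlib

noncomputable def stdGaussianPDF (t : ℝ) : ℝ :=
  (Real.sqrt (2 * Real.pi))⁻¹ * Real.exp (-t ^ 2 / 2)

noncomputable def stdGaussianCDF (x : ℝ) : ℝ :=
  ∫ t in Set.Iic x, stdGaussianPDF t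

/-- The two-anchor map `Γ(r,g) = (Φ((r-τ₁)e^{-g}), Φ((r-τ₂)e^{-g}))`. -/
noncomputable def twoAnchorMap (τ₁ τ₂ : ℝ) (p : ℝ × ℝ) : ℝ × ℝ :=
  (stdGaussianCDF ((p.1 - τ₁) * Real.exp (-p.2)),
   stdGaussianCDF ((p.1 - τ₂) * Real.exp (-p.2)))

lemma stdGaussianPDF_cont : Continuous stdGaussianPDF := by
  unfold stdGaussianPDF; fun_prop

lemma stdGaussianPDF_integrable : MeasureTheory.Integrable stdGaussianPDF := by
  unfold stdGaussianPDF
  apply MeasureTheory.Integrable.const_mul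
  have : ∀ t : ℝ, Real.exp (-t ^ 2 / 2) = Real.exp (-(1/2 : ℝ) * t ^ 2) := by
    intro t; ring_nf
  simp only [this]
  exact integrable_exp_neg_mul_sq (by norm_num)

lemma stdGaussianPDF_pos (t : ℝ) : 0 < stdGaussianPDF t := by
  unfold stdGaussianPDF
  positivity

lemma stdGaussianPDF_le (t : ℝ) : stdGaussianPDF t ≤ (Real.sqrt (2 * Real.pi))⁻¹ := by
  unfold stdGaussianPDF
  have h1 : Real.exp (-t ^ 2 / 2) ≤ 1 := by
    rw [Real.exp_le_one_iff]; nlinarith [sq_nonneg t]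
  have h2 : (0:ℝ) < (Real.sqrt (2 * Real.pi))⁻¹ := by positivity
  nlinarith

lemma stdGaussianPDF_anti {s t : ℝ} (h : |s| ≤ |t|) :
    stdGaussianPDF t ≤ stdGaussianPDF s := by
  unfold stdGaussianPDF
  have h2 : (0:ℝ) < (Real.sqrt (2 * Real.pi))⁻¹ := by positivity
  have : Real.exp (-t ^ 2 / 2) ≤ Real.exp (-s ^ 2 / 2) := by
    apply Real.exp_le_exp.mpr
    have hs : s ^ 2 ≤ t ^ 2 := by
      nlinarith [sq_abs s, sq_abs t, abs_nonneg s, abs_nonneg t, h]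
    linarith
  nlinarith

lemma stdGaussianCDF_eq (y : ℝ) :
    stdGaussianCDF y = stdGaussianCDF 0 + ∫ t in (0:ℝ)..y, stdGaussianPDF t := by
  have := intervalIntegral.integral_Iic_sub_Iic
    (stdGaussianPDF_integrable.integrableOn (s := Set.Iic 0))
    (stdGaussianPDF_integrable.integrableOn (s := Set.Iic y)) (μ := MeasureTheory.volume)
  unfold stdGaussianCDF
  linarith [this]

lemma stdGaussianCDF_hasDerivAt (x : ℝ) :
    HasDerivAt stdGaussianCDF (stdGaussianPDF x) x := by
  have h : HasDerivAt (fun y => stdGaussianCDF 0 + ∫ t in (0:ℝ)..y, stdGaussianPDF t)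
      (stdGaussianPDF x) x := by
    apply HasDerivAt.const_add
    exact intervalIntegral.integral_hasDerivAt_right
      stdGaussianPDF_integrable.intervalIntegrable
      (stdGaussianPDF_cont.stronglyMeasurableAtFilter _ _)
      stdGaussianPDF_cont.continuousAt
  exact h.congr_of_eventuallyEq (Filter.Eventually.of_forall fun y => stdGaussianCDF_eq y)

lemma inner_hasFDerivAt (τ r g : ℝ) :
    HasFDerivAt (fun p : ℝ × ℝ => (p.1 - τ) * Real.exp (-p.2))
      (Real.exp (-g) • ContinuousLinearMap.fst ℝ ℝ ℝ
        - ((r - τ) * Real.exp (-g)) • ContinuousLinearMap.snd ℝ ℝ ℝ) (r, g) := by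
  have h1 : HasFDerivAt (fun p : ℝ × ℝ => p.1 - τ) (ContinuousLinearMap.fst ℝ ℝ ℝ) (r, g) :=
    hasFDerivAt_fst.sub_const τ
  have h2 : HasFDerivAt (fun p : ℝ × ℝ => Real.exp (-p.2))
      ((-Real.exp (-g)) • ContinuousLinearMap.snd ℝ ℝ ℝ) (r, g) := by
    have hn : HasFDerivAt (fun p : ℝ × ℝ => -p.2) (-ContinuousLinearMap.snd ℝ ℝ ℝ) (r, g) :=
      hasFDerivAt_snd.neg
    have := (Real.hasDerivAt_exp (-g)).comp_hasFDerivAt (r, g) hn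
    refine this.congr_fderiv ?_
    ext x <;> simp [mul_comm]
  have h := h1.mul h2
  refine h.congr_fderiv ?_
  ext x <;> simp <;> ring

lemma comp_hasFDerivAt (τ r g : ℝ) :
    HasFDerivAt (fun p : ℝ × ℝ => stdGaussianCDF ((p.1 - τ) * Real.exp (-p.2)))
      (stdGaussianPDF ((r - τ) * Real.exp (-g)) •
        (Real.exp (-g) • ContinuousLinearMap.fst ℝ ℝ ℝ
          - ((r - τ) * Real.exp (-g)) • ContinuousLinearMap.snd ℝ ℝ ℝ)) (r, g) :=
  (stdGaussianCDF_hasDerivAt _).comp_hasFDerivAt (r, g) (inner_hasFDerivAt τ r g)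

lemma twoAnchor_hasFDerivAt (τ₁ τ₂ r g : ℝ) :
    HasFDerivAt (twoAnchorMap τ₁ τ₂)
      (((stdGaussianPDF ((r - τ₁) * Real.exp (-g)) •
        (Real.exp (-g) • ContinuousLinearMap.fst ℝ ℝ ℝ
          - ((r - τ₁) * Real.exp (-g)) • ContinuousLinearMap.snd ℝ ℝ ℝ))).prod
       ((stdGaussianPDF ((r - τ₂) * Real.exp (-g)) •
        (Real.exp (-g) • ContinuousLinearMap.fst ℝ ℝ ℝ
          - ((r - τ₂) * Real.exp (-g)) • ContinuousLinearMap.snd ℝ ℝ ℝ)))) (r, g) :=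
  (comp_hasFDerivAt τ₁ r g).prodMk (comp_hasFDerivAt τ₂ r g)

lemma twoAnchor_fderiv_apply (τ₁ τ₂ r g : ℝ) (v : ℝ × ℝ) :
    fderiv ℝ (twoAnchorMap τ₁ τ₂) (r, g) v =
      (stdGaussianPDF ((r - τ₁) * Real.exp (-g)) *
        (Real.exp (-g) * v.1 - (r - τ₁) * Real.exp (-g) * v.2),
       stdGaussianPDF ((r - τ₂) * Real.exp (-g)) *
        (Real.exp (-g) * v.1 - (r - τ₂) * Real.exp (-g) * v.2)) := by
  rw [(twoAnchor_hasFDerivAt τ₁ τ₂ r g).fderiv]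
  simp [mul_sub]

lemma key_cs (a b c d x y : ℝ) :
    (a*d - b*c)^2 * (x^2 + y^2) ≤ (a^2+b^2+c^2+d^2) * ((a*x+b*y)^2 + (c*x+d*y)^2) := by
  nlinarith [sq_nonneg (b*(a*x+b*y) + d*(c*x+d*y)), sq_nonneg (a*(a*x+b*y) + c*(c*x+d*y)),
    sq_nonneg (d*(a*x+b*y) - b*(c*x+d*y)), sq_nonneg (a*(c*x+d*y) - c*(a*x+b*y))]

/-- Uniform nondegeneracy of the Jacobian of the two-anchor map on a bounded set:
`JᵀJ ⪰ c_J I₂`, expressed as `‖J v‖₂² ≥ c_J ‖v‖₂²` for all `v`. -/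
theorem two_anchor_jacobian_nondegenerate (τ₁ τ₂ R : ℝ) (hτ : τ₁ < τ₂) (hR : 0 < R) :
    ∃ cJ > 0, ∀ r g : ℝ, |r| ≤ R → |g| ≤ R → ∀ v : ℝ × ℝ,
      cJ * (v.1 ^ 2 + v.2 ^ 2)
        ≤ ((fderiv ℝ (twoAnchorMap τ₁ τ₂) (r, g) v).1) ^ 2
          + ((fderiv ℝ (twoAnchorMap τ₁ τ₂) (r, g) v).2) ^ 2 := by
  set E : ℝ := Real.exp R with hE
  set ε : ℝ := Real.exp (-R) with hε
  set M : ℝ := (R + |τ₁| + |τ₂|) * E with hM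
  set K : ℝ := (Real.sqrt (2 * Real.pi))⁻¹ with hK
  have hKpos : 0 < K := by rw [hK]; positivity
  have hEpos : 0 < E := Real.exp_pos R
  have hεpos : 0 < ε := Real.exp_pos (-R)
  have hMpos : 0 < M := by
    apply mul_pos _ hEpos
    have := abs_nonneg τ₁; have := abs_nonneg τ₂; linarith
  set φm : ℝ := stdGaussianPDF M with hφm
  have hφmpos : 0 < φm := stdGaussianPDF_pos M
  set S : ℝ := 2 * K ^ 2 * (E ^ 2 + M ^ 2) with hS
  have hSpos : 0 < S := by rw [hS]; positivity
  set D : ℝ := φm ^ 2 * ε ^ 2 * (τ₂ - τ₁) with hD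
  have hDpos : 0 < D := by
    apply mul_pos (by positivity); linarith
  refine ⟨D ^ 2 / S, by positivity, fun r g hr hg v => ?_⟩
  rw [twoAnchor_fderiv_apply]
  set e : ℝ := Real.exp (-g) with he
  have hepos : 0 < e := Real.exp_pos _
  have heE : e ≤ E := Real.exp_le_exp.mpr (by linarith [abs_le.mp hg |>.1])
  have heε : ε ≤ e := Real.exp_le_exp.mpr (by linarith [abs_le.mp hg |>.2])
  set u₁ : ℝ := (r - τ₁) * e with hu₁
  set u₂ : ℝ := (r - τ₂) * e with hu₂
  have habs : ∀ τ : ℝ, |τ| ≤ |τ₁| + |τ₂| → |(r - τ) * e| ≤ M := by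
    intro τ hτa
    rw [abs_mul, abs_of_pos hepos, hM]
    have h1 : |r - τ| ≤ R + (|τ₁| + |τ₂|) := by
      calc |r - τ| ≤ |r| + |τ| := abs_sub _ _
        _ ≤ R + (|τ₁| + |τ₂|) := add_le_add hr hτa
    calc |r - τ| * e ≤ (R + (|τ₁| + |τ₂|)) * E := by
          apply mul_le_mul h1 heE hepos.le
          linarith [abs_nonneg τ₁, abs_nonneg τ₂]
      _ = (R + |τ₁| + |τ₂|) * E := by ring
  have hu₁M : |u₁| ≤ M := habs τ₁ (by linarith [abs_nonneg τ₂])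
  have hu₂M : |u₂| ≤ M := habs τ₂ (by linarith [abs_nonneg τ₁])
  set φ₁ : ℝ := stdGaussianPDF u₁ with hφ₁
  set φ₂ : ℝ := stdGaussianPDF u₂ with hφ₂
  have hφ₁pos : 0 < φ₁ := stdGaussianPDF_pos _
  have hφ₂pos : 0 < φ₂ := stdGaussianPDF_pos _
  have hφ₁m : φm ≤ φ₁ := stdGaussianPDF_anti (by rwa [abs_of_pos hMpos])
  have hφ₂m : φm ≤ φ₂ := stdGaussianPDF_anti (by rwa [abs_of_pos hMpos])
  have hφ₁K : φ₁ ≤ K := stdGaussianPDF_le _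
  have hφ₂K : φ₂ ≤ K := stdGaussianPDF_le _
  clear_value E ε M K φm S D e u₁ u₂ φ₁ φ₂
  -- entries of the Jacobian
  set a : ℝ := φ₁ * e with ha
  set b : ℝ := -(φ₁ * u₁) with hb
  set c : ℝ := φ₂ * e with hc
  set d : ℝ := -(φ₂ * u₂) with hd
  clear_value a b c d
  have hdet : a * d - b * c = φ₁ * φ₂ * e ^ 2 * (τ₂ - τ₁) := by
    rw [ha, hb, hc, hd, hu₁, hu₂]; ring
  have hdetD : D ≤ a * d - b * c := by
    rw [hdet, hD]
    have h1 : φm * φm ≤ φ₁ * φ₂ := mul_le_mul hφ₁m hφ₂m hφmpos.le (by linarith)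
    have h2 : ε * ε ≤ e * e := mul_le_mul heε heε hεpos.le hepos.le
    have h12 : (φm * φm) * (ε * ε) ≤ (φ₁ * φ₂) * (e * e) :=
      mul_le_mul h1 h2 (by positivity) (by positivity)
    have h3 : (0:ℝ) ≤ τ₂ - τ₁ := by linarith
    have := mul_le_mul_of_nonneg_right h12 h3
    calc φm ^ 2 * ε ^ 2 * (τ₂ - τ₁) = (φm * φm) * (ε * ε) * (τ₂ - τ₁) := by ring
      _ ≤ (φ₁ * φ₂) * (e * e) * (τ₂ - τ₁) := this
      _ = φ₁ * φ₂ * e ^ 2 * (τ₂ - τ₁) := by ring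
  have hfro : a ^ 2 + b ^ 2 + c ^ 2 + d ^ 2 ≤ S := by
    rw [hS]
    have h1 : u₁ ^ 2 ≤ M ^ 2 := by
      rw [← sq_abs u₁]; exact pow_le_pow_left₀ (abs_nonneg _) hu₁M 2
    have h2 : u₂ ^ 2 ≤ M ^ 2 := by
      rw [← sq_abs u₂]; exact pow_le_pow_left₀ (abs_nonneg _) hu₂M 2
    have h3 : e ^ 2 ≤ E ^ 2 := pow_le_pow_left₀ hepos.le heE 2
    have h4 : φ₁ ^ 2 ≤ K ^ 2 := pow_le_pow_left₀ hφ₁pos.le hφ₁K 2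
    have h5 : φ₂ ^ 2 ≤ K ^ 2 := pow_le_pow_left₀ hφ₂pos.le hφ₂K 2
    have hb2 : b ^ 2 = φ₁ ^ 2 * u₁ ^ 2 := by rw [hb]; ring
    have ha2 : a ^ 2 = φ₁ ^ 2 * e ^ 2 := by rw [ha]; ring
    have hc2 : c ^ 2 = φ₂ ^ 2 * e ^ 2 := by rw [hc]; ring
    have hd2 : d ^ 2 = φ₂ ^ 2 * u₂ ^ 2 := by rw [hd]; ring
    rw [ha2, hb2, hc2, hd2]
    have t1 : φ₁ ^ 2 * e ^ 2 ≤ K ^ 2 * E ^ 2 :=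
      mul_le_mul h4 h3 (sq_nonneg _) (sq_nonneg _)
    have t2 : φ₁ ^ 2 * u₁ ^ 2 ≤ K ^ 2 * M ^ 2 :=
      mul_le_mul h4 h1 (sq_nonneg _) (sq_nonneg _)
    have t3 : φ₂ ^ 2 * e ^ 2 ≤ K ^ 2 * E ^ 2 :=
      mul_le_mul h5 h3 (sq_nonneg _) (sq_nonneg _)
    have t4 : φ₂ ^ 2 * u₂ ^ 2 ≤ K ^ 2 * M ^ 2 :=
      mul_le_mul h5 h2 (sq_nonneg _) (sq_nonneg _)
    have hrhs : 2 * K ^ 2 * (E ^ 2 + M ^ 2)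
        = K ^ 2 * E ^ 2 + K ^ 2 * M ^ 2 + K ^ 2 * E ^ 2 + K ^ 2 * M ^ 2 := by ring
    rw [hrhs]
    linarith
  have hXY : φ₁ * (e * v.1 - u₁ * v.2) = a * v.1 + b * v.2 ∧
      φ₂ * (e * v.1 - u₂ * v.2) = c * v.1 + d * v.2 := by
    constructor <;> (simp only [ha, hb, hc, hd]; ring)
  have hkey := key_cs a b c d v.1 v.2
  have hD2 : D ^ 2 * (v.1 ^ 2 + v.2 ^ 2) ≤ (a * d - b * c) ^ 2 * (v.1 ^ 2 + v.2 ^ 2) := by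
    apply mul_le_mul_of_nonneg_right _ (by positivity)
    exact pow_le_pow_left₀ hDpos.le hdetD 2
  have hq : 0 ≤ (a * v.1 + b * v.2) ^ 2 + (c * v.1 + d * v.2) ^ 2 := by positivity
  have hfin : D ^ 2 * (v.1 ^ 2 + v.2 ^ 2) ≤ S * ((a * v.1 + b * v.2) ^ 2 + (c * v.1 + d * v.2) ^ 2) := by
    calc D ^ 2 * (v.1 ^ 2 + v.2 ^ 2) ≤ (a * d - b * c) ^ 2 * (v.1 ^ 2 + v.2 ^ 2) := hD2
      _ ≤ (a ^ 2 + b ^ 2 + c ^ 2 + d ^ 2) * ((a * v.1 + b * v.2) ^ 2 + (c * v.1 + d * v.2) ^ 2) :=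
          hkey
      _ ≤ S * ((a * v.1 + b * v.2) ^ 2 + (c * v.1 + d * v.2) ^ 2) :=
          mul_le_mul_of_nonneg_right hfro hq
  have goal1 : D ^ 2 / S * (v.1 ^ 2 + v.2 ^ 2)
      ≤ (a * v.1 + b * v.2) ^ 2 + (c * v.1 + d * v.2) ^ 2 := by
    rw [div_mul_eq_mul_div, div_le_iff₀ hSpos]
    calc D ^ 2 * (v.1 ^ 2 + v.2 ^ 2)
        ≤ S * ((a * v.1 + b * v.2) ^ 2 + (c * v.1 + d * v.2) ^ 2) := hfin
      _ = ((a * v.1 + b * v.2) ^ 2 + (c * v.1 + d * v.2) ^ 2) * S := by ring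
  simpa only [hXY.1, hXY.2] using goal1
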